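/- Let G be a finite simple graph containing pairwise edge-disjoint cliques K_{s₁}, K_{s₂}, ..., K_{s_t} with each s_i ≥ 3. Then at least Σ_{i=1}^{t} C(s_i,3)/(1 + 3(s_i - 3)) of the H-eigenvalues of G (counted with multiplicity) are greater than or equal to 3, where C(s,3) = s(s-1)(s-2)/6. In particular, if ω ≥ 3 is the clique number of G, then G has at least C(ω,3)/(1 + 3(ω - 3)) H-eigenvalues not less than 3. -/

import Mathlib

open scoped Classical
open scoped Matrix

namespace HelmPaper

variable {V : Type} [Fintype V] [DecidableEq V]

/-- The set of triangles of `G`, i.e. the 3-element cliques of `G`. -/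
abbrev Triangle (G : SimpleGraph V) : Type :=
  {s : Finset V // s.card = 3 ∧ G.IsClique (s : Set V)}

/-- An orientation of the edges of `G`: each edge `e` gets a head `e⁺` and a tail `e⁻`. -/
structure Orientation (G : SimpleGraph V) where
  head : G.edgeSet → V
  tail : G.edgeSet → V
  consistent : ∀ e : G.edgeSet, (e : Sym2 V) = s(head e, tail e)

/-- A cyclic orientation of each triangle of `G`, recorded by a representative ordered
triple of its three vertices. -/
structure TriOrientation (G : SimpleGraph V) where
  fst : Triangle G → V
  snd : Triangle G → V
  trd : Triangle G → V
  consistent : ∀ t : Triangle G, ({fst t, snd t, trd t} : Finset V) = t.val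

/-- The edge-vertex incidence matrix `B`. -/
noncomputable def bMat (G : SimpleGraph V) (o : Orientation G) : Matrix G.edgeSet V ℝ :=
  fun e v => if v = o.head e then 1 else if v = o.tail e then -1 else 0

/-- The oriented edge `e` agrees with the cyclic orientation of the triangle `t`. -/
def Agrees {G : SimpleGraph V} (o : Orientation G) (τ : TriOrientation G)
    (e : G.edgeSet) (t : Triangle G) : Prop :=
  (o.tail e = τ.fst t ∧ o.head e = τ.snd t) ∨
  (o.tail e = τ.snd t ∧ o.head e = τ.trd t) ∨
  (o.tail e = τ.trd t ∧ o.head e = τ.fst t)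

/-- The oriented edge `e` disagrees with the cyclic orientation of the triangle `t`. -/
def Disagrees {G : SimpleGraph V} (o : Orientation G) (τ : TriOrientation G)
    (e : G.edgeSet) (t : Triangle G) : Prop :=
  (o.head e = τ.fst t ∧ o.tail e = τ.snd t) ∨
  (o.head e = τ.snd t ∧ o.tail e = τ.trd t) ∨
  (o.head e = τ.trd t ∧ o.tail e = τ.fst t)

/-- The triangle-edge incidence matrix `C`. -/
noncomputable def cMat (G : SimpleGraph V) (o : Orientation G) (τ : TriOrientation G) :
    Matrix (Triangle G) G.edgeSet ℝ :=
  fun t e => if Agrees o τ e t then 1 else if Disagrees o τ e t then -1 else 0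

/-- The Helmholtzian matrix `H(G) = B Bᵀ + Cᵀ C`. -/
noncomputable def helm (G : SimpleGraph V) (o : Orientation G) (τ : TriOrientation G) :
    Matrix G.edgeSet G.edgeSet ℝ :=
  bMat G o * (bMat G o)ᵀ + (cMat G o τ)ᵀ * cMat G o τ

/-- The edge `e` (as an unordered pair of vertices) lies in the triangle `t`. -/
def EdgeInTri (G : SimpleGraph V) (e : Sym2 V) (t : Triangle G) : Prop :=
  ∀ v ∈ e, v ∈ t.val

/-- The triangle degree `△(e)`: the number of triangles of `G` containing the edge `e`. -/
noncomputable def triDeg (G : SimpleGraph V) (e : Sym2 V) : ℕ :=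
  (Finset.univ.filter fun t : Triangle G => EdgeInTri G e t).card



section Helpers

open Polynomial

set_option linter.unusedSectionVars false

variable {n : Type} [Fintype n] [DecidableEq n]


lemma charpoly_hermitian (A : Matrix n n ℝ) (hA : A.IsHermitian) :
    A.charpoly = ∏ i, (X - C (hA.eigenvalues i)) := by
  classical
  set U : Matrix n n ℝ := (hA.eigenvectorUnitary : Matrix n n ℝ) with hU
  have hUU : U * star U = 1 := Matrix.mem_unitaryGroup_iff.mp hA.eigenvectorUnitary.2
  set D : Matrix n n ℝ := Matrix.diagonal hA.eigenvalues with hD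
  have hspec : A = U * D * star U := by
    have := hA.spectral_theorem
    simpa [RCLike.ofReal_real_eq_id, hD] using this
  have hmm : ∀ M N : Matrix n n ℝ, (M * N).map (C : ℝ →+* ℝ[X]) = M.map C * N.map C := by
    intro M N
    rw [show ∀ M : Matrix n n ℝ, M.map (C : ℝ →+* ℝ[X]) = (C : ℝ →+* ℝ[X]).mapMatrix M from
      fun _ => rfl]
    exact map_mul _ _ _
  have hcm : Matrix.charmatrix A =
      (U.map C) * (Matrix.charmatrix D) * ((star U).map C) := by
    unfold Matrix.charmatrix
    rw [Matrix.mul_sub, Matrix.sub_mul,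
      ← Matrix.scalar_commute (X : ℝ[X]) (fun r' => Commute.all _ _) (U.map C),
      Matrix.mul_assoc, ← hmm, hUU]
    simp only [RingHom.mapMatrix_apply]
    rw [Matrix.map_one _ (map_zero C) (map_one C), Matrix.mul_one, ← hmm, ← hmm, ← hspec]
  have hdet1 : (U.map (C : ℝ →+* ℝ[X])).det * ((star U).map C).det = 1 := by
    simp only [show ∀ M : Matrix n n ℝ, M.map (C : ℝ →+* ℝ[X]) = (C : ℝ →+* ℝ[X]).mapMatrix M from
      fun _ => rfl]
    rw [← (C : ℝ →+* ℝ[X]).map_det, ← (C : ℝ →+* ℝ[X]).map_det, ← map_mul, ← Matrix.det_mul, hUU,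
      Matrix.det_one, map_one]
  have hcd : Matrix.charpoly D = ∏ i, (X - C (hA.eigenvalues i)) := by
    unfold Matrix.charpoly Matrix.charmatrix
    rw [hD]
    simp only [RingHom.mapMatrix_apply]
    rw [show ((Matrix.diagonal hA.eigenvalues).map (C : ℝ →+* ℝ[X])) =
        Matrix.diagonal (fun i => C (hA.eigenvalues i)) from
      Matrix.diagonal_map (map_zero C)]
    rw [show (Matrix.scalar n (X : ℝ[X])) = Matrix.diagonal (fun _ : n => (X : ℝ[X])) from rfl]
    rw [Matrix.diagonal_sub, Matrix.det_diagonal]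
  calc A.charpoly = (Matrix.charmatrix A).det := rfl
    _ = (U.map C).det * (Matrix.charmatrix D).det * ((star U).map C).det := by
        rw [hcm, Matrix.det_mul, Matrix.det_mul]
    _ = (Matrix.charmatrix D).det * ((U.map (C : ℝ →+* ℝ[X])).det * ((star U).map C).det) := by
        ring
    _ = ∏ i, (X - C (hA.eigenvalues i)) := by rw [hdet1, mul_one]; exact hcd

lemma roots_filter_card (A : Matrix n n ℝ) (hA : A.IsHermitian) :
    ((A.charpoly.roots.filter fun x => 3 ≤ x).card : ℕ) =
      (Finset.univ.filter fun i => 3 ≤ hA.eigenvalues i).card := by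
  classical
  rw [charpoly_hermitian A hA]
  have hne : ∀ i ∈ (Finset.univ : Finset n), (X - C (hA.eigenvalues i)) ≠ 0 :=
    fun i _ => X_sub_C_ne_zero _
  rw [Polynomial.roots_prod _ _ (Finset.prod_ne_zero_iff.mpr hne)]
  simp only [Polynomial.roots_X_sub_C]
  rw [Multiset.bind_singleton, Multiset.filter_map, Multiset.card_map]
  rfl

set_option linter.unusedSectionVars false


lemma dot_of_sums {κ : Type} [Fintype κ] (u : κ → n → ℝ) (c d : κ → ℝ) :
    ∑ e, (∑ i, c i * u i e) * (∑ j, d j * u j e) =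
      ∑ i, ∑ j, (c i * d j) * ∑ e, u i e * u j e :=
  calc ∑ e, (∑ i, c i * u i e) * (∑ j, d j * u j e)
      = ∑ e, ∑ i, ∑ j, (c i * d j) * (u i e * u j e) := by
        refine Finset.sum_congr rfl fun e _ => ?_
        rw [Finset.sum_mul_sum]
        exact Finset.sum_congr rfl fun i _ => Finset.sum_congr rfl fun j _ => by ring
    _ = ∑ i, ∑ e, ∑ j, (c i * d j) * (u i e * u j e) := Finset.sum_comm
    _ = ∑ i, ∑ j, ∑ e, (c i * d j) * (u i e * u j e) :=
        Finset.sum_congr rfl fun i _ => Finset.sum_comm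
    _ = ∑ i, ∑ j, (c i * d j) * ∑ e, u i e * u j e :=
        Finset.sum_congr rfl fun i _ => Finset.sum_congr rfl fun j _ =>
          (Finset.mul_sum _ _ _).symm

lemma mulVec_sum_smul (A : Matrix n n ℝ) {κ : Type} [Fintype κ] (c : κ → ℝ) (u : κ → n → ℝ) :
    A *ᵥ (∑ j, c j • u j) = ∑ j, c j • (A *ᵥ u j) := by
  funext e
  simp only [Matrix.mulVec, dotProduct, Finset.sum_apply, Pi.smul_apply, smul_eq_mul,
    Finset.mul_sum]
  rw [Finset.sum_comm]
  exact Finset.sum_congr rfl fun j _ => Finset.sum_congr rfl fun f _ => by ring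

lemma count_ge (A : Matrix n n ℝ) (hA : A.IsHermitian) {ι : Type} [Fintype ι]
    (w : ι → n → ℝ)
    (hw3 : ∀ i : ι, (∑ e, w i e * w i e) = 3)
    (hw0 : ∀ i j : ι, i ≠ j → (∑ e, w i e * w j e) = 0)
    (hq : ∀ a : ι → ℝ,
      3 * (∑ e, (∑ i, a i * w i e) * (∑ i, a i * w i e)) ≤
        ∑ e, (∑ i, a i * w i e) * (A *ᵥ fun e' => ∑ i, a i * w i e') e) :
    (Fintype.card ι : ℕ) ≤ (Finset.univ.filter fun i => 3 ≤ hA.eigenvalues i).card := by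
  classical
  have hw : ∀ i j : ι, (∑ e, w i e * w j e) = if i = j then 3 else 0 := by
    intro i j
    by_cases h : i = j
    · subst h; simp [hw3]
    · simp [h, hw0 i j h]
  set eig := hA.eigenvalues with heig
  set S : Finset n := Finset.univ.filter (fun i => eig i < 3) with hS
  set v : n → (n → ℝ) := fun i => ⇑(hA.eigenvectorBasis i) with hv
  have hvv : ∀ i j : n, (∑ e, v i e * v j e) = if i = j then 1 else 0 := by
    intro i j
    have h := orthonormal_iff_ite.mp hA.eigenvectorBasis.orthonormal i j
    rw [← h, PiLp.inner_apply]
    simp [hv]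
    exact Finset.sum_congr rfl fun _ _ => mul_comm _ _
  have hAv : ∀ i : n, A *ᵥ v i = eig i • v i := fun i => hA.mulVec_eigenvectorBasis i
  have hvv' : ∀ j k : {x // x ∈ S}, (∑ e, v ↑j e * v ↑k e) = if j = k then 1 else 0 := by
    intro j k
    rw [hvv]
    by_cases h : j = k
    · simp [h]
    · rw [if_neg h, if_neg (fun hc => h (Subtype.ext hc))]
  have hli : LinearIndependent ℝ (Sum.elim w (fun j : {x // x ∈ S} => v ↑j)) := by
    rw [Fintype.linearIndependent_iff]
    intro g hg
    set a : ι → ℝ := fun i => g (Sum.inl i) with ha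
    set b : {x // x ∈ S} → ℝ := fun j => g (Sum.inr j) with hb
    have hsplit : (∑ i, a i • w i) + (∑ j : {x // x ∈ S}, b j • v ↑j) = 0 := by
      rw [← hg, Fintype.sum_sum_type]; rfl
    set x : n → ℝ := fun e => ∑ i, a i * w i e with hx
    have hxw : x = ∑ i, a i • w i := by
      funext e; rw [hx]; simp [Finset.sum_apply]
    have hxy : x = ∑ j : {x // x ∈ S}, (-(b j)) • v ↑j := by
      rw [hxw]
      have := eq_neg_of_add_eq_zero_left hsplit
      rw [this, ← Finset.sum_neg_distrib]
      exact Finset.sum_congr rfl fun j _ => (neg_smul _ _).symm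
    have hxe : ∀ e, x e = ∑ j : {x // x ∈ S}, (-(b j)) * v ↑j e := by
      intro e; rw [hxy]; simp [Finset.sum_apply]
    have hxx : (∑ e, x e * x e) = ∑ j : {x // x ∈ S}, b j * b j := by
      simp only [hxe]
      rw [dot_of_sums]
      simp only [hvv']
      simp [Finset.sum_ite_eq, mul_ite]
    have hAx : ∀ e, (A *ᵥ x) e = ∑ j : {x // x ∈ S}, (-(b j) * eig ↑j) * v ↑j e := by
      intro e
      rw [hxy, mulVec_sum_smul]
      simp only [Finset.sum_apply, Pi.smul_apply, smul_eq_mul]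
      refine Finset.sum_congr rfl fun j _ => ?_
      rw [hAv]
      simp [mul_assoc]
    have hxAx : (∑ e, x e * (A *ᵥ x) e) = ∑ j : {x // x ∈ S}, eig ↑j * (b j * b j) := by
      simp only [hxe, hAx]
      rw [dot_of_sums]
      simp only [hvv']
      simp only [mul_ite, mul_one, mul_zero, Finset.sum_ite_eq, Finset.mem_univ, if_true]
      exact Finset.sum_congr rfl fun j _ => by ring
    have hq' : 3 * (∑ e, x e * x e) ≤ ∑ e, x e * (A *ᵥ x) e := by
      have := hq a
      simpa [hx] using this
    rw [hxx, hxAx] at hq'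
    have hterm : ∀ j : {x // x ∈ S}, (3 - eig ↑j) * (b j * b j) = 0 := by
      have hsum : (∑ j : {x // x ∈ S}, (3 - eig ↑j) * (b j * b j)) ≤ 0 := by
        have : (∑ j : {x // x ∈ S}, (3 - eig ↑j) * (b j * b j)) =
            3 * (∑ j : {x // x ∈ S}, b j * b j) -
              ∑ j : {x // x ∈ S}, eig ↑j * (b j * b j) := by
          rw [Finset.mul_sum, ← Finset.sum_sub_distrib]
          exact Finset.sum_congr rfl fun j _ => by ring
        rw [this]; linarith
      have hnn : ∀ j ∈ (Finset.univ : Finset {x // x ∈ S}),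
          0 ≤ (3 - eig ↑j) * (b j * b j) := by
        intro j _
        have hj : eig ↑j < 3 := (Finset.mem_filter.mp j.2).2
        have := mul_self_nonneg (b j)
        nlinarith
      intro j
      have := (Finset.sum_eq_zero_iff_of_nonneg hnn).mp
        (le_antisymm hsum (Finset.sum_nonneg hnn)) j (Finset.mem_univ j)
      exact this
    have hbz : ∀ j, b j = 0 := by
      intro j
      have hj : eig ↑j < 3 := (Finset.mem_filter.mp j.2).2
      have h0 := hterm j
      have : b j * b j = 0 := by
        rcases mul_eq_zero.mp h0 with h | h
        · linarith
        · exact h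
      exact mul_self_eq_zero.mp this
    have hxz : x = 0 := by
      rw [hxy]
      funext e
      simp [hbz, Finset.sum_apply]
    have haz : ∀ i, a i = 0 := by
      intro i0
      have h1 : (∑ e, w i0 e * x e) = 0 := by
        rw [hxz]; simp
      have h2 : (∑ e, w i0 e * x e) = 3 * a i0 := by
        simp only [hx, Finset.mul_sum]
        rw [Finset.sum_comm]
        have : ∀ i, (∑ e, w i0 e * (a i * w i e)) = a i * ∑ e, w i0 e * w i e := by
          intro i; rw [Finset.mul_sum]; exact Finset.sum_congr rfl fun e _ => by ring
        simp only [this, hw]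
        simp [Finset.sum_ite_eq, mul_ite]
        ring
      rw [h1] at h2
      linarith
    intro k
    rcases k with i | j
    · exact haz i
    · exact hbz j
  have hcard : Fintype.card (ι ⊕ {x // x ∈ S}) ≤ Fintype.card n := by
    have := hli.fintype_card_le_finrank
    rwa [Module.finrank_pi ℝ] at this
  rw [Fintype.card_sum, Fintype.card_coe] at hcard
  have hsplitn : S.card + (Finset.univ.filter fun i => 3 ≤ eig i).card = Fintype.card n := by
    rw [hS]
    have := Finset.card_filter_add_card_filter_not
      (s := (Finset.univ : Finset n)) (p := fun i => eig i < 3)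
    simp only [not_lt] at this
    rwa [Finset.card_univ] at this
  omega

end Helpers

section Comb

variable {V : Type} [Fintype V] [DecidableEq V]

lemma greedy (D : ℕ) (N : ℕ) : ∀ (T : Finset (Finset V)), T.card ≤ N →
    (∀ s ∈ T, (T.filter fun s' => 2 ≤ (s ∩ s').card).card ≤ D) →
    (∀ s ∈ T, 2 ≤ s.card) →
    ∃ F ⊆ T, (∀ s ∈ F, ∀ s' ∈ F, s ≠ s' → (s ∩ s').card ≤ 1) ∧ T.card ≤ F.card * D := by
  induction N with
  | zero =>
    intro T hT _ _
    refine ⟨∅, Finset.empty_subset _, by simp, ?_⟩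
    simpa using hT
  | succ N ih =>
    intro T hTN hdeg hc2
    rcases eq_or_ne T ∅ with rfl | hne
    · exact ⟨∅, Finset.empty_subset _, by simp, by simp⟩
    obtain ⟨s, hs⟩ := Finset.nonempty_of_ne_empty hne
    set Nb : Finset (Finset V) := T.filter fun s' => 2 ≤ (s ∩ s').card with hNb
    have hsNb : s ∈ Nb := by
      rw [hNb, Finset.mem_filter]
      exact ⟨hs, by rw [Finset.inter_self]; exact hc2 s hs⟩
    set T' : Finset (Finset V) := T \ Nb with hT'
    have hT'sub : T' ⊆ T := Finset.sdiff_subset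
    have hsT' : s ∉ T' := by
      rw [hT', Finset.mem_sdiff]
      exact fun h => h.2 hsNb
    have hT'card : T'.card + Nb.card = T.card := by
      rw [hT']
      exact Finset.card_sdiff_add_card_eq_card (Finset.filter_subset _ _)
    have hT'N : T'.card ≤ N := by
      have : T'.card < T.card := Finset.card_lt_card ⟨hT'sub, fun h => hsT' (h hs)⟩
      omega
    obtain ⟨F', hF'sub, hF'ind, hF'cnt⟩ := ih T' hT'N
      (fun u hu => le_trans (Finset.card_le_card
        (Finset.filter_subset_filter _ hT'sub)) (hdeg u (hT'sub hu)))
      (fun u hu => hc2 u (hT'sub hu))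
    have hsF' : s ∉ F' := fun h => hsT' (hF'sub h)
    refine ⟨insert s F', Finset.insert_subset hs (hF'sub.trans hT'sub), ?_, ?_⟩
    · have hkey : ∀ u' ∈ F', (s ∩ u').card ≤ 1 := by
        intro u' hu'
        have hnb : u' ∉ Nb := by
          have := hF'sub hu'
          rw [hT', Finset.mem_sdiff] at this
          exact this.2
        rw [hNb, Finset.mem_filter, not_and] at hnb
        have := hnb (hF'sub.trans hT'sub hu')
        omega
      intro u hu u' hu' huu'
      rcases Finset.mem_insert.mp hu with h | hmem <;>
        rcases Finset.mem_insert.mp hu' with h' | hmem'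
      · exact absurd (h.trans h'.symm) huu'
      · rw [h]; exact hkey u' hmem'
      · rw [h', Finset.inter_comm]; exact hkey u hmem
      · exact hF'ind u hmem u' hmem' huu'
    · rw [Finset.card_insert_of_notMem hsF']
      have hNbD : Nb.card ≤ D := hdeg s hs
      have : T.card = T'.card + Nb.card := hT'card.symm
      calc T.card = T'.card + Nb.card := this
        _ ≤ F'.card * D + D := by omega
        _ = (F'.card + 1) * D := by ring

lemma deg_bound (K : Finset V) (s : Finset V) (hsK : s ⊆ K) (hs3 : s.card = 3) :
    ((K.powersetCard 3).filter fun s' => 2 ≤ (s ∩ s').card).card ≤ 1 + 3 * (K.card - 3) := by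
  classical
  set R : Finset (Finset V) :=
    (K.powersetCard 3).filter fun s' => s' ≠ s ∧ 2 ≤ (s ∩ s').card with hR
  have hsub : ((K.powersetCard 3).filter fun s' => 2 ≤ (s ∩ s').card) ⊆ insert s R := by
    intro u hu
    rw [Finset.mem_filter] at hu
    rcases eq_or_ne u s with rfl | hus
    · exact Finset.mem_insert_self _ _
    · exact Finset.mem_insert_of_mem (by rw [hR, Finset.mem_filter]; exact ⟨hu.1, hus, hu.2⟩)
  have hcardR : R.card ≤ 3 * (K.card - 3) := by
    have hinj : ∀ u ∈ R, (s \ u, u \ s) ∈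
        (s.powersetCard 1) ×ˢ ((K \ s).powersetCard 1) := by
      intro u hu
      rw [hR, Finset.mem_filter, Finset.mem_powersetCard] at hu
      obtain ⟨⟨huK, hu3⟩, hus, hint⟩ := hu
      have hint3 : (s ∩ u).card ≠ 3 := by
        intro h3
        have : s ∩ u = s := Finset.eq_of_subset_of_card_le Finset.inter_subset_left (by omega)
        have hsu : s ⊆ u := by
          intro a ha; rw [← this] at ha; exact (Finset.mem_inter.mp ha).2
        exact hus (Finset.eq_of_subset_of_card_le hsu (by omega)).symm
      have hle : (s ∩ u).card ≤ 3 := le_trans (Finset.card_le_card Finset.inter_subset_left)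
        (by omega)
      have hint2 : (s ∩ u).card = 2 := by omega
      have h1 : (s \ u).card = 1 := by
        have := Finset.card_sdiff_add_card_inter s u
        omega
      have h2 : (u \ s).card = 1 := by
        have := Finset.card_sdiff_add_card_inter u s
        rw [Finset.inter_comm] at this
        omega
      rw [Finset.mem_product, Finset.mem_powersetCard, Finset.mem_powersetCard]
      refine ⟨⟨Finset.sdiff_subset, h1⟩, ⟨?_, h2⟩⟩
      intro a ha
      rw [Finset.mem_sdiff] at ha ⊢
      exact ⟨huK ha.1, ha.2⟩
    have hinj2 : ∀ u ∈ R, ∀ u' ∈ R,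
        (s \ u, u \ s) = (s \ u', u' \ s) → u = u' := by
      intro u hu u' hu' heq
      rw [Prod.mk.injEq] at heq
      have h1 : s ∩ u = s ∩ u' := by
        rw [← Finset.sdiff_sdiff_self_left s u, ← Finset.sdiff_sdiff_self_left s u', heq.1]
      have hu1 : u = u \ s ∪ u ∩ s := (Finset.sdiff_union_inter u s).symm
      have hu2 : u' = u' \ s ∪ u' ∩ s := (Finset.sdiff_union_inter u' s).symm
      rw [hu1, hu2, heq.2, Finset.inter_comm u s, Finset.inter_comm u' s, h1]
    have := Finset.card_le_card_of_injOn (fun u => (s \ u, u \ s))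
      (fun u hu => hinj u hu) (fun u hu u' hu' h => hinj2 u hu u' hu' h)
    rw [Finset.card_product, Finset.card_powersetCard, Finset.card_powersetCard] at this
    rw [Finset.card_sdiff_of_subset hsK, hs3] at this
    simpa [Nat.choose_one_right] using this
  calc ((K.powersetCard 3).filter fun s' => 2 ≤ (s ∩ s').card).card
      ≤ (insert s R).card := Finset.card_le_card hsub
    _ ≤ R.card + 1 := Finset.card_insert_le _ _
    _ ≤ 1 + 3 * (K.card - 3) := by omega

lemma clique_family (K : Finset V) (h3 : 3 ≤ K.card) :
    ∃ F ⊆ K.powersetCard 3, (∀ s ∈ F, ∀ s' ∈ F, s ≠ s' → (s ∩ s').card ≤ 1) ∧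
      K.card.choose 3 ≤ F.card * (1 + 3 * (K.card - 3)) := by
  obtain ⟨F, hFsub, hind, hcnt⟩ := greedy (V := V) (1 + 3 * (K.card - 3))
    (K.powersetCard 3).card (K.powersetCard 3) le_rfl
    (fun s hs => by
      rw [Finset.mem_powersetCard] at hs
      exact deg_bound K s hs.1 hs.2)
    (fun s hs => by
      rw [Finset.mem_powersetCard] at hs
      omega)
  refine ⟨F, hFsub, hind, ?_⟩
  rwa [Finset.card_powersetCard] at hcnt

end Comb

section GraphLemmas

set_option linter.unusedSectionVars false

variable {G : SimpleGraph V} {o : Orientation G} {τ : TriOrientation G}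

lemma tri_mem_fst (t : Triangle G) : τ.fst t ∈ t.val := by
  rw [← τ.consistent t]; simp
lemma tri_mem_snd (t : Triangle G) : τ.snd t ∈ t.val := by
  rw [← τ.consistent t]; simp
lemma tri_mem_trd (t : Triangle G) : τ.trd t ∈ t.val := by
  rw [← τ.consistent t]; simp

lemma tri_ne (t : Triangle G) :
    τ.fst t ≠ τ.snd t ∧ τ.snd t ≠ τ.trd t ∧ τ.fst t ≠ τ.trd t := by
  have h3 : ({τ.fst t, τ.snd t, τ.trd t} : Finset V).card = 3 := by
    rw [τ.consistent t]; exact t.2.1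
  refine ⟨?_, ?_, ?_⟩ <;> intro h
  · rw [h] at h3
    have : ({τ.snd t, τ.snd t, τ.trd t} : Finset V) = {τ.snd t, τ.trd t} := by
      simp [Finset.insert_idem]
    rw [this] at h3
    have := Finset.card_insert_le (τ.snd t) ({τ.trd t} : Finset V)
    simp at this h3
    omega
  · rw [h] at h3
    have : ({τ.fst t, τ.trd t, τ.trd t} : Finset V) = {τ.fst t, τ.trd t} := by
      simp [Finset.insert_idem]
    rw [this] at h3
    have := Finset.card_insert_le (τ.fst t) ({τ.trd t} : Finset V)
    simp at this h3
    omega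
  · rw [h] at h3
    have : ({τ.trd t, τ.snd t, τ.trd t} : Finset V) = {τ.snd t, τ.trd t} := by
      ext x; simp only [Finset.mem_insert, Finset.mem_singleton]; tauto
    rw [this] at h3
    have := Finset.card_insert_le (τ.snd t) ({τ.trd t} : Finset V)
    simp at this h3
    omega

lemma edge_consistent (e : G.edgeSet) : (e : Sym2 V) = s(o.head e, o.tail e) := o.consistent e

lemma edge_adj (e : G.edgeSet) : G.Adj (o.head e) (o.tail e) := by
  have h := e.2
  rw [show (e : Sym2 V) = s(o.head e, o.tail e) from o.consistent e] at h
  exact (SimpleGraph.mem_edgeSet G).mp h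

lemma cMat_cases (t : Triangle G) (e : G.edgeSet) :
    ((cMat G o τ t e = 1 ∨ cMat G o τ t e = -1) ∧
      (o.head e ∈ t.val ∧ o.tail e ∈ t.val)) ∨
    (cMat G o τ t e = 0 ∧ ¬(o.head e ∈ t.val ∧ o.tail e ∈ t.val)) := by
  classical
  by_cases hA : Agrees o τ e t
  · left
    refine ⟨Or.inl (by simp [cMat, hA]), ?_⟩
    rcases hA with ⟨h1, h2⟩ | ⟨h1, h2⟩ | ⟨h1, h2⟩ <;>
      exact ⟨by rw [h2]; first | exact tri_mem_fst t | exact tri_mem_snd t | exact tri_mem_trd t,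
        by rw [h1]; first | exact tri_mem_fst t | exact tri_mem_snd t | exact tri_mem_trd t⟩
  by_cases hD : Disagrees o τ e t
  · left
    refine ⟨Or.inr (by simp [cMat, hA, hD]), ?_⟩
    rcases hD with ⟨h1, h2⟩ | ⟨h1, h2⟩ | ⟨h1, h2⟩ <;>
      exact ⟨by rw [h1]; first | exact tri_mem_fst t | exact tri_mem_snd t | exact tri_mem_trd t,
        by rw [h2]; first | exact tri_mem_fst t | exact tri_mem_snd t | exact tri_mem_trd t⟩
  · right
    refine ⟨by simp [cMat, hA, hD], ?_⟩
    rintro ⟨hh, ht⟩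
    have hne : o.head e ≠ o.tail e := (edge_adj e).ne
    have hmem : ∀ v, v ∈ t.val ↔ (v = τ.fst t ∨ v = τ.snd t ∨ v = τ.trd t) := by
      intro v
      rw [← τ.consistent t]
      simp [Finset.mem_insert]
    rw [hmem] at hh ht
    rcases hh with h1 | h1 | h1 <;> rcases ht with h2 | h2 | h2
    · exact hne (h1.trans h2.symm)
    · exact hD (Or.inl ⟨h1, h2⟩)
    · exact hA (Or.inr (Or.inr ⟨h2, h1⟩))
    · exact hA (Or.inl ⟨h2, h1⟩)
    · exact hne (h1.trans h2.symm)
    · exact hD (Or.inr (Or.inl ⟨h1, h2⟩))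
    · exact hD (Or.inr (Or.inr ⟨h1, h2⟩))
    · exact hA (Or.inr (Or.inl ⟨h2, h1⟩))
    · exact hne (h1.trans h2.symm)

lemma cMat_mul_self (t : Triangle G) (e : G.edgeSet) :
    cMat G o τ t e * cMat G o τ t e =
      if o.head e ∈ t.val ∧ o.tail e ∈ t.val then 1 else 0 := by
  rcases cMat_cases (τ := τ) t e with ⟨h1, h2⟩ | ⟨h1, h2⟩
  · rw [if_pos h2]
    rcases h1 with h | h <;> rw [h] <;> norm_num
  · rw [if_neg h2, h1, mul_zero]

lemma cMat_self_dot (t : Triangle G) :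
    (∑ e : G.edgeSet, cMat G o τ t e * cMat G o τ t e) = 3 := by
  classical
  simp only [cMat_mul_self]
  rw [Finset.sum_boole]
  obtain ⟨hfs, hsr, hfr⟩ := tri_ne (τ := τ) t
  have hclique := t.2.2
  have hAfs : G.Adj (τ.fst t) (τ.snd t) := hclique (tri_mem_fst t) (tri_mem_snd t) hfs
  have hAsr : G.Adj (τ.snd t) (τ.trd t) := hclique (tri_mem_snd t) (tri_mem_trd t) hsr
  have hAfr : G.Adj (τ.fst t) (τ.trd t) := hclique (tri_mem_fst t) (tri_mem_trd t) hfr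
  have hmem : ∀ v, v ∈ t.val ↔ (v = τ.fst t ∨ v = τ.snd t ∨ v = τ.trd t) := by
    intro v; rw [← τ.consistent t]; simp [Finset.mem_insert]
  have hcard : (Finset.univ.filter fun e : G.edgeSet =>
      o.head e ∈ t.val ∧ o.tail e ∈ t.val).card =
      ({s(τ.fst t, τ.snd t), s(τ.snd t, τ.trd t), s(τ.fst t, τ.trd t)} : Finset (Sym2 V)).card := by
    refine Finset.card_bij (fun e _ => (e : Sym2 V)) ?_ ?_ ?_
    · intro e he
      rw [Finset.mem_filter] at he
      obtain ⟨-, hh, ht⟩ := he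
      rw [hmem] at hh ht
      have hne : o.head e ≠ o.tail e := (edge_adj e).ne
      show (e : Sym2 V) ∈ _
      rw [show (e : Sym2 V) = s(o.head e, o.tail e) from o.consistent e]
      rcases hh with h1 | h1 | h1 <;> rcases ht with h2 | h2 | h2 <;>
        first
          | exact absurd (h1.trans h2.symm) hne
          | (rw [h1, h2]; simp only [Finset.mem_insert, Finset.mem_singleton, Sym2.eq_iff]; tauto)
    · intro e _ e' _ h
      exact Subtype.ext h
    · intro y hy
      simp only [Finset.mem_insert, Finset.mem_singleton] at hy
      have key : ∀ (a b : V), a ∈ t.val → b ∈ t.val → G.Adj a b →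
          ∃ e, ∃ he : e ∈ (Finset.univ.filter fun e : G.edgeSet =>
            o.head e ∈ t.val ∧ o.tail e ∈ t.val), ((e : Sym2 V)) = s(a, b) := by
        intro a b ha hb hab
        refine ⟨⟨s(a,b), (SimpleGraph.mem_edgeSet G).mpr hab⟩, ?_, rfl⟩
        rw [Finset.mem_filter]
        refine ⟨Finset.mem_univ _, ?_⟩
        set e : G.edgeSet := ⟨s(a,b), (SimpleGraph.mem_edgeSet G).mpr hab⟩ with he
        have hc : s(a, b) = s(o.head e, o.tail e) := o.consistent e
        rw [Sym2.eq_iff] at hc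
        rcases hc with ⟨h1, h2⟩ | ⟨h1, h2⟩
        · rw [← h1, ← h2]; exact ⟨ha, hb⟩
        · rw [← h1, ← h2]; exact ⟨hb, ha⟩
      rcases hy with rfl | rfl | rfl
      · obtain ⟨e, he, h⟩ := key _ _ (tri_mem_fst t) (tri_mem_snd t) hAfs
        exact ⟨e, he, h⟩
      · obtain ⟨e, he, h⟩ := key _ _ (tri_mem_snd t) (tri_mem_trd t) hAsr
        exact ⟨e, he, h⟩
      · obtain ⟨e, he, h⟩ := key _ _ (tri_mem_fst t) (tri_mem_trd t) hAfr
        exact ⟨e, he, h⟩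
  rw [hcard]
  have h1 : s(τ.fst t, τ.snd t) ∉ ({s(τ.snd t, τ.trd t), s(τ.fst t, τ.trd t)} : Finset (Sym2 V)) := by
    simp [Sym2.eq_iff, hfs, hsr, hfr, Ne.symm hfs, Ne.symm hsr, Ne.symm hfr]
  have h2 : s(τ.snd t, τ.trd t) ∉ ({s(τ.fst t, τ.trd t)} : Finset (Sym2 V)) := by
    simp [Sym2.eq_iff, hfs, hsr, hfr, Ne.symm hfs, Ne.symm hsr, Ne.symm hfr]
  rw [Finset.card_insert_of_notMem h1, Finset.card_insert_of_notMem h2, Finset.card_singleton]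
  norm_num

lemma cMat_orth (t t' : Triangle G) (hint : (t.val ∩ t'.val).card ≤ 1) :
    (∑ e : G.edgeSet, cMat G o τ t e * cMat G o τ t' e) = 0 := by
  refine Finset.sum_eq_zero fun e _ => ?_
  rcases cMat_cases (τ := τ) t e with ⟨h1, h2⟩ | ⟨h1, _⟩
  · rcases cMat_cases (τ := τ) t' e with ⟨h1', h2'⟩ | ⟨h1', _⟩
    · exfalso
      have hne : o.head e ≠ o.tail e := (edge_adj e).ne
      have hsub : ({o.head e, o.tail e} : Finset V) ⊆ t.val ∩ t'.val := by
        intro v hv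
        rcases Finset.mem_insert.mp hv with rfl | hv
        · exact Finset.mem_inter.mpr ⟨h2.1, h2'.1⟩
        · rw [Finset.mem_singleton] at hv
          rw [hv]
          exact Finset.mem_inter.mpr ⟨h2.2, h2'.2⟩
      have := Finset.card_le_card hsub
      rw [Finset.card_pair hne] at this
      omega
    · rw [h1', mul_zero]
  · rw [h1, zero_mul]

lemma quad_transpose_mul {n : Type} [Fintype n] {k : Type} [Fintype k]
    (M : Matrix k n ℝ) (x : n → ℝ) :
    (∑ e, x e * ((Mᵀ * M) *ᵥ x) e) = ∑ i, (M *ᵥ x) i * (M *ᵥ x) i := by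
  have hL : (∑ e, x e * ((Mᵀ * M) *ᵥ x) e)
      = ∑ e, ∑ i, ∑ f, (M i e * x e) * (M i f * x f) := by
    refine Finset.sum_congr rfl fun e _ => ?_
    simp only [Matrix.mulVec, dotProduct, Matrix.mul_apply, Matrix.transpose_apply,
      Finset.sum_mul, Finset.mul_sum]
    rw [Finset.sum_comm]
    refine Finset.sum_congr rfl fun i _ => Finset.sum_congr rfl fun f _ => by ring
  have hR : (∑ i, (M *ᵥ x) i * (M *ᵥ x) i)
      = ∑ i, ∑ e, ∑ f, (M i e * x e) * (M i f * x f) := by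
    refine Finset.sum_congr rfl fun i _ => ?_
    simp only [Matrix.mulVec, dotProduct]
    rw [Finset.sum_mul_sum]
  rw [hL, hR, Finset.sum_comm]

lemma helm_isHermitian (G : SimpleGraph V) (o : Orientation G) (τ : TriOrientation G) :
    (helm G o τ).IsHermitian := by
  unfold helm
  have h1 : bMat G o * (bMat G o)ᵀ = bMat G o * (bMat G o)ᴴ := by
    rw [Matrix.conjTranspose_eq_transpose_of_trivial]
  have h2 : (cMat G o τ)ᵀ * cMat G o τ = (cMat G o τ)ᴴ * cMat G o τ := by
    rw [Matrix.conjTranspose_eq_transpose_of_trivial]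
  rw [h1, h2]
  exact Matrix.IsHermitian.add (Matrix.isHermitian_mul_conjTranspose_self _)
    (Matrix.isHermitian_conjTranspose_mul_self _)


end GraphLemmas

/-- If `G` contains pairwise edge-disjoint cliques `K_{s₁}, …, K_{s_t}`
with each `sᵢ ≥ 3`, then at least `Σᵢ C(sᵢ,3)/(1 + 3(sᵢ - 3))` of the `H`-eigenvalues of
`G` (with multiplicity) are at least `3`. In particular, if `ω ≥ 3` is the clique number
of `G`, then at least `C(ω,3)/(1 + 3(ω - 3))` of the `H`-eigenvalues are at least `3`. -/
theorem statement19 (G : SimpleGraph V) (o : Orientation G) (τ : TriOrientation G) :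
    (∀ (t : ℕ) (K : Fin t → Finset V),
      (∀ i, G.IsClique (K i)) → (∀ i, 3 ≤ (K i).card) →
      (∀ i j, i ≠ j → ∀ a b : V, G.Adj a b →
        ¬(a ∈ K i ∧ b ∈ K i ∧ a ∈ K j ∧ b ∈ K j)) →
      (∑ i, ((K i).card.choose 3 : ℝ) / (1 + 3 * (((K i).card : ℝ) - 3))) ≤
        (((helm G o τ).charpoly.roots.filter fun x => 3 ≤ x).card : ℝ)) ∧
    (∀ ω : ℕ, IsGreatest {n : ℕ | ∃ K : Finset V, G.IsNClique n K} ω → 3 ≤ ω →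
      (ω.choose 3 : ℝ) / (1 + 3 * ((ω : ℝ) - 3)) ≤
        (((helm G o τ).charpoly.roots.filter fun x => 3 ≤ x).card : ℝ)) := by
  classical
  have hherm : (helm G o τ).IsHermitian := helm_isHermitian G o τ
  have main : ∀ (t : ℕ) (K : Fin t → Finset V),
      (∀ i, G.IsClique (K i)) → (∀ i, 3 ≤ (K i).card) →
      (∀ i j, i ≠ j → ∀ a b : V, G.Adj a b →
        ¬(a ∈ K i ∧ b ∈ K i ∧ a ∈ K j ∧ b ∈ K j)) →
      (∑ i, ((K i).card.choose 3 : ℝ) / (1 + 3 * (((K i).card : ℝ) - 3))) ≤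
        (((helm G o τ).charpoly.roots.filter fun x => 3 ≤ x).card : ℝ) := by
    intro t K hclique hcard3 hdisj
    choose F hFsub hFind hFcnt using fun i => clique_family (K i) (hcard3 i)
    have hmem : ∀ i, ∀ s ∈ F i, s ⊆ K i ∧ s.card = 3 :=
      fun i s hs => Finset.mem_powersetCard.mp (hFsub i hs)
    have hcliqs : ∀ i, ∀ s ∈ F i, G.IsClique (s : Set V) := by
      intro i s hs
      exact SimpleGraph.IsClique.subset (Finset.coe_subset.mpr (hmem i s hs).1) (hclique i)
    have hdisjF : ∀ i j, i ≠ j → Disjoint (F i) (F j) := by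
      intro i j hij
      rw [Finset.disjoint_left]
      intro s hsi hsj
      have h2 : 1 < s.card := by have := (hmem i s hsi).2; omega
      obtain ⟨a, ha, b, hb, hab⟩ := Finset.one_lt_card.mp h2
      have hadj : G.Adj a b := hcliqs i s hsi ha hb hab
      exact hdisj i j hij a b hadj
        ⟨(hmem i s hsi).1 ha, (hmem i s hsi).1 hb, (hmem j s hsj).1 ha, (hmem j s hsj).1 hb⟩
    set p : Finset V → Prop := fun s => s.card = 3 ∧ G.IsClique (s : Set V) with hp
    set Fall : Finset (Finset V) := Finset.univ.biUnion F with hFall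
    have hFallp : ∀ s ∈ Fall, p s := by
      intro s hs
      obtain ⟨i, -, hi⟩ := Finset.mem_biUnion.mp hs
      exact ⟨(hmem i s hi).2, hcliqs i s hi⟩
    set I : Finset (Triangle G) := Fall.subtype p with hI
    have hIcard : I.card = ∑ i, (F i).card := by
      rw [hI, Finset.card_subtype, Finset.filter_true_of_mem hFallp, hFall]
      exact Finset.card_biUnion (fun i _ j _ hij => hdisjF i j hij)
    have hIval : ∀ u : Triangle G, u ∈ I → ∃ i, u.val ∈ F i := by
      intro u hu
      rw [hI, Finset.mem_subtype] at hu
      obtain ⟨i, -, hi⟩ := Finset.mem_biUnion.mp hu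
      exact ⟨i, hi⟩
    have hpair : ∀ u ∈ I, ∀ u' ∈ I, u ≠ u' →
        ((u : Triangle G).val ∩ (u' : Triangle G).val).card ≤ 1 := by
      intro u hu u' hu' hne
      obtain ⟨i, hi⟩ := hIval u hu
      obtain ⟨j, hj⟩ := hIval u' hu'
      by_cases hij : i = j
      · subst hij
        exact hFind i u.val hi u'.val hj (fun h => hne (Subtype.ext h))
      · by_contra hcon
        push_neg at hcon
        obtain ⟨a, ha, b, hb, hab⟩ := Finset.one_lt_card.mp hcon
        have ha1 := (Finset.mem_inter.mp ha).1
        have ha2 := (Finset.mem_inter.mp ha).2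
        have hb1 := (Finset.mem_inter.mp hb).1
        have hb2 := (Finset.mem_inter.mp hb).2
        have hadj : G.Adj a b := u.2.2 ha1 hb1 hab
        exact hdisj i j hij a b hadj
          ⟨(hmem i _ hi).1 ha1, (hmem i _ hi).1 hb1, (hmem j _ hj).1 ha2, (hmem j _ hj).1 hb2⟩
    set w : {x // x ∈ I} → (G.edgeSet → ℝ) := fun u e => cMat G o τ u.val e with hwdef
    have hw : ∀ u u' : {x // x ∈ I}, (∑ e, w u e * w u' e) = if u = u' then 3 else 0 := by
      intro u u'
      by_cases h : u = u'
      · subst h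
        rw [if_pos rfl]
        simp only [hwdef]
        exact cMat_self_dot u.val
      · rw [if_neg h]
        simp only [hwdef]
        exact cMat_orth _ _ (hpair u.val u.2 u'.val u'.2 (fun hc => h (Subtype.ext hc)))
    have hq : ∀ a : {x // x ∈ I} → ℝ,
        3 * (∑ e, (∑ u, a u * w u e) * (∑ u, a u * w u e)) ≤
          ∑ e, (∑ u, a u * w u e) * ((helm G o τ) *ᵥ fun e' => ∑ u, a u * w u e') e := by
      intro a
      set x : G.edgeSet → ℝ := fun e => ∑ u, a u * w u e with hxdef
      show 3 * (∑ e, x e * x e) ≤ ∑ e, x e * ((helm G o τ) *ᵥ x) e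
      have hxx : (∑ e, x e * x e) = 3 * ∑ u, a u * a u := by
        simp only [hxdef]
        rw [dot_of_sums]
        simp only [hw, mul_ite, mul_zero, Finset.sum_ite_eq, Finset.mem_univ, if_true]
        rw [Finset.mul_sum]
        exact Finset.sum_congr rfl fun u _ => by ring
      have hsplit : (∑ e, x e * ((helm G o τ) *ᵥ x) e) =
          (∑ e, x e * ((bMat G o * (bMat G o)ᵀ) *ᵥ x) e) +
          (∑ e, x e * (((cMat G o τ)ᵀ * cMat G o τ) *ᵥ x) e) := by
        simp only [helm, Matrix.add_mulVec, Pi.add_apply, mul_add, Finset.sum_add_distrib]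
      have hB : 0 ≤ ∑ e, x e * ((bMat G o * (bMat G o)ᵀ) *ᵥ x) e := by
        have h := quad_transpose_mul ((bMat G o)ᵀ) x
        rw [Matrix.transpose_transpose] at h
        rw [h]
        exact Finset.sum_nonneg fun v _ => mul_self_nonneg _
      have hCx : ∀ u : {x // x ∈ I}, (cMat G o τ *ᵥ x) u.val = 3 * a u := by
        intro u
        show (∑ e, cMat G o τ u.val e * x e) = 3 * a u
        simp only [hxdef, Finset.mul_sum]
        rw [Finset.sum_comm]
        have hstep : ∀ u' : {x // x ∈ I},
            (∑ e, cMat G o τ u.val e * (a u' * w u' e)) = a u' * ∑ e, w u e * w u' e := by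
          intro u'
          rw [Finset.mul_sum]
          refine Finset.sum_congr rfl fun e _ => ?_
          simp only [hwdef]
          ring
        simp only [hstep, hw, mul_ite, mul_zero, Finset.sum_ite_eq, Finset.mem_univ, if_true]
        ring
      have hC : 9 * (∑ u, a u * a u) ≤
          ∑ e, x e * (((cMat G o τ)ᵀ * cMat G o τ) *ᵥ x) e := by
        rw [quad_transpose_mul (cMat G o τ) x]
        have hsub : (∑ v ∈ I, (cMat G o τ *ᵥ x) v * (cMat G o τ *ᵥ x) v) ≤
            ∑ v : Triangle G, (cMat G o τ *ᵥ x) v * (cMat G o τ *ᵥ x) v :=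
          Finset.sum_le_sum_of_subset_of_nonneg (Finset.subset_univ I)
            (fun v _ _ => mul_self_nonneg _)
        have heq : (∑ v ∈ I, (cMat G o τ *ᵥ x) v * (cMat G o τ *ᵥ x) v) =
            9 * ∑ u, a u * a u := by
          rw [← Finset.sum_coe_sort I (fun v => (cMat G o τ *ᵥ x) v * (cMat G o τ *ᵥ x) v)]
          rw [Finset.mul_sum]
          refine Finset.sum_congr rfl fun u _ => ?_
          rw [hCx u]
          ring
        linarith
      rw [hxx, hsplit]
      linarith
    have hcount := count_ge (helm G o τ) hherm w
      (fun u => by have := hw u u; simpa using this)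
      (fun u u' h => by have := hw u u'; simpa [h] using this) hq
    rw [Fintype.card_coe, ← roots_filter_card _ hherm] at hcount
    have hchain : (∑ i, ((K i).card.choose 3 : ℝ) / (1 + 3 * (((K i).card : ℝ) - 3))) ≤
        (I.card : ℝ) := by
      have hbound : ∀ i ∈ Finset.univ,
          ((K i).card.choose 3 : ℝ) / (1 + 3 * (((K i).card : ℝ) - 3)) ≤ ((F i).card : ℝ) := by
        intro i _
        have hc3 : (3 : ℝ) ≤ ((K i).card : ℝ) := by exact_mod_cast hcard3 i
        have hD : (0:ℝ) < 1 + 3 * (((K i).card : ℝ) - 3) := by linarith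
        rw [div_le_iff₀ hD]
        have hn := hFcnt i
        calc ((K i).card.choose 3 : ℝ)
            ≤ (((F i).card * (1 + 3 * ((K i).card - 3)) : ℕ) : ℝ) := by exact_mod_cast hn
          _ = ((F i).card : ℝ) * (1 + 3 * (((K i).card : ℝ) - 3)) := by
              push_cast [Nat.cast_sub (hcard3 i)]
              ring
      calc (∑ i, ((K i).card.choose 3 : ℝ) / (1 + 3 * (((K i).card : ℝ) - 3)))
          ≤ ∑ i, ((F i).card : ℝ) := Finset.sum_le_sum hbound
        _ = (I.card : ℝ) := by rw [hIcard]; push_cast; rfl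
    calc (∑ i, ((K i).card.choose 3 : ℝ) / (1 + 3 * (((K i).card : ℝ) - 3)))
        ≤ (I.card : ℝ) := hchain
      _ ≤ (((helm G o τ).charpoly.roots.filter fun x => 3 ≤ x).card : ℝ) := by
          exact_mod_cast hcount
  refine ⟨main, ?_⟩
  intro ω hω h3
  obtain ⟨K₀, hK₀⟩ := hω.1
  have h := main 1 (fun _ => K₀) (fun _ => hK₀.isClique)
    (fun _ => by rw [hK₀.card_eq]; exact h3)
    (fun i j hij => absurd (Subsingleton.elim i j) hij)
  simpa [Fin.sum_univ_one, hK₀.card_eq] using h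


end HelmPaper
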